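/- For all l₁, l₂ ∈ ℕ and m₁, m₂ ≥ 1, the composition of σ_{l₁,m₁} followed by σ_{l₂,m₂} equals σ_{l₂, m₁·m₂}. -/
import Mathlib


def bmul (x y : ℕ × ℕ) : ℕ × ℕ :=
  (x.1 + y.1 - min x.2 y.1, x.2 + y.2 - min x.2 y.1)

abbrev Cplus := {x : ℕ × ℕ // x.1 ≤ x.2}

instance : Mul Cplus :=
  ⟨fun x y => ⟨bmul x.1 y.1, by have hx := x.2; have hy := y.2; simp only [bmul]; omega⟩⟩

instance : One Cplus := ⟨⟨(0, 0), le_refl 0⟩⟩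

theorem Cplus.mul_def (x y : Cplus) : (x * y).1 = bmul x.1 y.1 := rfl

theorem Cplus.one_def : (1 : Cplus).1 = (0, 0) := rfl

instance : Monoid Cplus where
  mul_assoc x y z := Subtype.ext (by
    simp only [Cplus.mul_def, bmul, Prod.ext_iff]; omega)
  one_mul x := Subtype.ext (by
    have := x.2
    simp only [Cplus.mul_def, Cplus.one_def, bmul, Prod.ext_iff]; omega)
  mul_one x := Subtype.ext (by
    have := x.2
    simp only [Cplus.mul_def, Cplus.one_def, bmul, Prod.ext_iff]; omega)

def lam (k : ℕ) : Cplus → Cplus :=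
  fun x => ⟨(k * x.1.1, k * x.1.2), Nat.mul_le_mul_left k x.2⟩

def sig (l m : ℕ) : Cplus → Cplus := fun x =>
  if x.1.1 = x.1.2 then 1 else ⟨(l, l + m * (x.1.2 - x.1.1)), by omega⟩

def lamns (n s : ℕ) : Cplus → Cplus := fun x =>
  if x.1.1 = 0 then ⟨(0, n * x.1.2), Nat.zero_le _⟩
  else ⟨(n * x.1.1 - s, n * x.1.2 - s), by
    have := Nat.mul_le_mul_left n x.2; omega⟩

def vsig : Cplus → Cplus := fun x =>
  if x.1 = (0, 0) then 1 else ⟨(x.1.1 + 1, x.1.2 + 1), by have := x.2; omega⟩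

def bpow (x : ℕ × ℕ) : ℕ → ℕ × ℕ
  | 0 => (0, 0)
  | n + 1 => bmul (bpow x n) x

/-- σ_{l₁,m₁} followed by σ_{l₂,m₂} equals σ_{l₂,m₁m₂}. -/
theorem sig_comp (l₁ l₂ m₁ m₂ : ℕ) (h₁ : 1 ≤ m₁) (h₂ : 1 ≤ m₂) :
    sig l₂ m₂ ∘ sig l₁ m₁ = sig l₂ (m₁ * m₂) := by
  funext x
  simp only [Function.comp, sig]
  by_cases h : x.1.1 = x.1.2
  · simp [h, Cplus.one_def]
  · simp only [if_neg h]
    have hd : 0 < x.1.2 - x.1.1 := by have := x.2; omega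
    have hne : l₁ ≠ l₁ + m₁ * (x.1.2 - x.1.1) := by nlinarith
    simp only [if_neg hne]
    apply Subtype.ext
    have hsub : l₁ + m₁ * (x.1.2 - x.1.1) - l₁ = m₁ * (x.1.2 - x.1.1) := by omega
    simp only [hsub, Prod.ext_iff]
    constructor
    · trivial
    · rw [← mul_assoc, mul_comm m₂ m₁]
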